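/- (Neumann's lemma.) Let (Ω,M) be a finite transformation monoid whose group of units acts transitively on Ω: for all α, β ∈ Ω there exists an invertible element g of M (i.e., g ∈ M having an inverse in M) with αg = β. Then for every m in the minimal ideal I(M), the partition ker m is uniform: for all ω, ω' ∈ Ωm, the fibers satisfy |{α : αm = ω}| = |{α : αm = ω'}|; equivalently |Ωm| · |{α : αm = ω}| = |Ω| for every ω ∈ Ωm. -/

import Mathlib

/-- Neumann's lemma. Let `(Ω, M)` be a finite transformation monoid
whose group of units acts transitively on `Ω`.  Then for every `m` in the minimal
ideal `I(M)`, the partition `ker m` is uniform: all fibers of `m` over its image have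
the same cardinality; equivalently `|Ωm| ⋅ |{α : αm = ω}| = |Ω|` for every
`ω ∈ Ωm`. -/
theorem neumann_lemma {Ω : Type*} [Fintype Ω]
    (S : Set (Ω → Ω)) (hid : id ∈ S) (hcomp : ∀ m ∈ S, ∀ n ∈ S, n ∘ m ∈ S)
    (htrans : ∀ α β : Ω, ∃ g ∈ S,
      (∃ h ∈ S, g ∘ h = id ∧ h ∘ g = id) ∧ g α = β) :
    ∀ m ∈ S, (∀ n ∈ S, ∃ u ∈ S, ∃ v ∈ S, m = v ∘ n ∘ u) →
      (∀ ω ∈ Set.range m, ∀ ω' ∈ Set.range m,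
        {α : Ω | m α = ω}.ncard = {α : Ω | m α = ω'}.ncard) ∧
      (∀ ω ∈ Set.range m,
        (Set.range m).ncard * {α : Ω | m α = ω}.ncard = Fintype.card Ω) := by
  classical
  intro m hm hmin
  set R : Finset Ω := Finset.univ.image m with hRdef
  set GF : Finset (Ω → Ω) :=
    Finset.univ.filter (fun g => g ∈ S ∧ ∃ h ∈ S, g ∘ h = id ∧ h ∘ g = id) with hGFdef
  have hGFmem : ∀ g, g ∈ GF ↔ g ∈ S ∧ ∃ h ∈ S, g ∘ h = id ∧ h ∘ g = id := by
    intro g; simp [hGFdef]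
  have hidGF : (id : Ω → Ω) ∈ GF := (hGFmem id).mpr ⟨hid, id, hid, rfl, rfl⟩
  have hGFpos : 0 < GF.card := Finset.card_pos.mpr ⟨id, hidGF⟩
  -- fiber finsets
  set F : Ω → Finset Ω := fun ω => Finset.univ.filter (fun α => m α = ω) with hFdef
  -- key transversal lemma: for each unit `g`, `x ↦ m (g x)` permutes `R`
  have key : ∀ g ∈ GF, R.image (fun x => m (g x)) = R := by
    intro g hg
    obtain ⟨hgS, -⟩ := (hGFmem g).mp hg
    have hn : (fun x => m (g (m x))) ∈ S := by
      have h1 : g ∘ m ∈ S := hcomp m hm g hgS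
      exact hcomp (g ∘ m) h1 m hm
    obtain ⟨u, hu, v, hv, hmv⟩ := hmin _ hn
    have hsub : R.image (fun x => m (g x)) ⊆ R := by
      intro y hy
      simp only [Finset.mem_image] at hy
      obtain ⟨x, -, rfl⟩ := hy
      exact Finset.mem_image.mpr ⟨g x, Finset.mem_univ _, rfl⟩
    refine (Finset.eq_of_subset_of_card_le hsub ?_)
    have e1 : R = ((Finset.univ.image u).image (fun x => m (g (m x)))).image v := by
      rw [hRdef]
      conv_lhs => rw [hmv]
      rw [Finset.image_image, Finset.image_image]
      rfl
    have e2 : R.image (fun x => m (g x)) = Finset.univ.image (fun x => m (g (m x))) := by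
      rw [hRdef, Finset.image_image]
      rfl
    calc R.card = (((Finset.univ.image u).image (fun x => m (g (m x)))).image v).card := by
          rw [← e1]
      _ ≤ ((Finset.univ.image u).image (fun x => m (g (m x)))).card :=
          Finset.card_image_le
      _ ≤ (Finset.univ.image (fun x => m (g (m x)))).card :=
          Finset.card_le_card (Finset.image_subset_image (Finset.subset_univ _))
      _ = (R.image (fun x => m (g x))).card := by rw [e2]
  -- each fiber of `m` meets the "transversal" `g '' R` in exactly one point of R
  have trans1 : ∀ g ∈ GF, ∀ ω ∈ R, (R.filter (fun x => m (g x) = ω)).card = 1 := by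
    intro g hg ω hω
    have hinj : Set.InjOn (fun x => m (g x)) R := by
      refine Finset.card_image_iff.mp ?_
      rw [key g hg]
    have hex : ∃ x ∈ R, m (g x) = ω := by
      have : ω ∈ R.image (fun x => m (g x)) := by rw [key g hg]; exact hω
      simpa using this
    obtain ⟨x, hxR, hxω⟩ := hex
    rw [Finset.card_eq_one]
    refine ⟨x, ?_⟩
    ext y
    simp only [Finset.mem_filter, Finset.mem_singleton]
    constructor
    · rintro ⟨hyR, hyω⟩
      exact hinj (by simpa using hyR) (by simpa using hxR)
        (show m (g y) = m (g x) by rw [hyω, hxω])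
    · rintro rfl; exact ⟨hxR, hxω⟩
  -- the number of units sending x to β does not depend on β
  have hNconst : ∀ (x β β' : Ω),
      (GF.filter (fun g => g x = β)).card = (GF.filter (fun g => g x = β')).card := by
    intro x β β'
    obtain ⟨h, hhS, ⟨h', hh'S, hinv1, hinv2⟩, hhβ⟩ := htrans β β'
    have ph : ∀ z, h' (h z) = z := fun z => congrFun hinv2 z
    have ph' : ∀ z, h (h' z) = z := fun z => congrFun hinv1 z
    refine Finset.card_nbij' (fun g => h ∘ g) (fun g => h' ∘ g) ?_ ?_ ?_ ?_
    · intro g hg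
      change g ∈ GF.filter (fun g => g x = β) at hg; change h ∘ g ∈ GF.filter (fun g => g x = β')
      simp only [Finset.mem_filter] at hg ⊢
      obtain ⟨hgGF, hgx⟩ := hg
      obtain ⟨hgS, k, hkS, hk1, hk2⟩ := (hGFmem g).mp hgGF
      refine ⟨(hGFmem _).mpr ⟨hcomp g hgS h hhS, k ∘ h', hcomp h' hh'S k hkS, ?_, ?_⟩, ?_⟩
      · funext z
        simp only [Function.comp_apply, id_eq]
        rw [show g (k (h' z)) = h' z from congrFun hk1 (h' z), ph' z]
      · funext z
        simp only [Function.comp_apply, id_eq]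
        rw [ph (g z)]
        exact congrFun hk2 z
      · simp [Function.comp_apply, hgx, hhβ]
    · intro g hg
      change g ∈ GF.filter (fun g => g x = β') at hg; change h' ∘ g ∈ GF.filter (fun g => g x = β)
      simp only [Finset.mem_filter] at hg ⊢
      obtain ⟨hgGF, hgx⟩ := hg
      obtain ⟨hgS, k, hkS, hk1, hk2⟩ := (hGFmem g).mp hgGF
      refine ⟨(hGFmem _).mpr ⟨hcomp g hgS h' hh'S, k ∘ h, hcomp h hhS k hkS, ?_, ?_⟩, ?_⟩
      · funext z
        simp only [Function.comp_apply, id_eq]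
        rw [show g (k (h z)) = h z from congrFun hk1 (h z), ph z]
      · funext z
        simp only [Function.comp_apply, id_eq]
        rw [ph' (g z)]
        exact congrFun hk2 z
      · have hb : h' β' = β := by rw [← hhβ, ph]
        simp [Function.comp_apply, hgx, hb]
    · intro g hg
      funext z
      exact ph (g z)
    · intro g hg
      funext z
      exact ph' (g z)
  -- hence |Ω| * N x β = |GF|
  have hON : ∀ x β : Ω, Fintype.card Ω * (GF.filter (fun g => g x = β)).card = GF.card := by
    intro x β
    have h1 : GF.card = ∑ b ∈ Finset.univ, (GF.filter (fun g => g x = b)).card :=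
      Finset.card_eq_sum_card_fiberwise (fun g _ => Finset.mem_univ (g x))
    have h2 : ∑ b ∈ Finset.univ, (GF.filter (fun g => g x = b)).card
        = ∑ _b ∈ (Finset.univ : Finset Ω), (GF.filter (fun g => g x = β)).card :=
      Finset.sum_congr rfl (fun b _ => hNconst x b β)
    rw [h1, h2, Finset.sum_const, Finset.card_univ, smul_eq_mul]
  -- main counting identity
  have main : ∀ ω ∈ R, R.card * (F ω).card = Fintype.card Ω := by
    intro ω hω
    obtain ⟨α₀, -, hα₀⟩ := Finset.mem_image.mp hω
    have hα₀F : α₀ ∈ F ω := by simp [hFdef, hα₀]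
    have step1 : GF.card = ∑ g ∈ GF, (R.filter (fun x => m (g x) = ω)).card := by
      rw [Finset.sum_congr rfl (fun g hg => trans1 g hg ω hω)]
      simp
    have step2 : ∑ g ∈ GF, (R.filter (fun x => m (g x) = ω)).card
        = ∑ x ∈ R, (GF.filter (fun g => m (g x) = ω)).card := by
      simp only [Finset.card_filter]
      exact Finset.sum_comm
    have step3 : ∀ x : Ω, (GF.filter (fun g => m (g x) = ω)).card
        = ∑ β ∈ F ω, (GF.filter (fun g => g x = β)).card := by
      intro x
      have h1 : (GF.filter (fun g => m (g x) = ω)).card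
          = ∑ β ∈ F ω, ((GF.filter (fun g => m (g x) = ω)).filter (fun g => g x = β)).card := by
        refine Finset.card_eq_sum_card_fiberwise ?_
        intro g hg
        change g ∈ GF.filter (fun g => m (g x) = ω) at hg
        simp only [Finset.mem_filter] at hg
        simp [hFdef, hg.2]
      rw [h1]
      refine Finset.sum_congr rfl ?_
      intro β hβ
      congr 1
      ext g
      simp only [Finset.mem_filter, hFdef, Finset.mem_univ, true_and] at hβ ⊢
      constructor
      · rintro ⟨⟨hgGF, -⟩, hgx⟩; exact ⟨hgGF, hgx⟩
      · rintro ⟨hgGF, hgx⟩; exact ⟨⟨hgGF, by rw [hgx, hβ]⟩, hgx⟩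
    have step4 : GF.card = ∑ x ∈ R, ∑ β ∈ F ω, (GF.filter (fun g => g x = β)).card := by
      rw [step1, step2]
      exact Finset.sum_congr rfl (fun x _ => step3 x)
    have step5 : Fintype.card Ω * GF.card
        = ∑ x ∈ R, (F ω).card * GF.card := by
      calc Fintype.card Ω * GF.card
          = ∑ x ∈ R, ∑ β ∈ F ω, Fintype.card Ω * (GF.filter (fun g => g x = β)).card := by
            rw [step4, Finset.mul_sum]
            exact Finset.sum_congr rfl (fun x _ => Finset.mul_sum _ _ _)
        _ = ∑ x ∈ R, ∑ β ∈ F ω, GF.card :=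
            Finset.sum_congr rfl (fun x _ => Finset.sum_congr rfl (fun β _ => hON x β))
        _ = ∑ x ∈ R, (F ω).card * GF.card := by
            exact Finset.sum_congr rfl (fun x _ => by rw [Finset.sum_const, smul_eq_mul])
    have step6 : Fintype.card Ω * GF.card = (R.card * (F ω).card) * GF.card := by
      rw [step5, Finset.sum_const, smul_eq_mul, mul_assoc]
    exact (Nat.eq_of_mul_eq_mul_right hGFpos step6).symm
  -- translate to the required statement
  have hrange : ∀ ω : Ω, ω ∈ Set.range m ↔ ω ∈ R := by
    intro ω; simp [hRdef, Set.mem_range, eq_comm]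
  have hncardR : (Set.range m).ncard = R.card := by
    have : Set.range m = (R : Set Ω) := by
      ext ω; simp [hrange ω]
    rw [this, Set.ncard_coe_finset]
  have hncardF : ∀ ω : Ω, {α : Ω | m α = ω}.ncard = (F ω).card := by
    intro ω
    have : {α : Ω | m α = ω} = ((F ω : Finset Ω) : Set Ω) := by
      ext α; simp [hFdef]
    rw [this, Set.ncard_coe_finset]
  constructor
  · intro ω hω ω' hω'
    have h1 := main ω ((hrange ω).mp hω)
    have h2 := main ω' ((hrange ω').mp hω')
    have hRpos : 0 < R.card :=
      Finset.card_pos.mpr ⟨ω, (hrange ω).mp hω⟩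
    rw [hncardF, hncardF]
    exact Nat.eq_of_mul_eq_mul_left hRpos (by rw [h1, h2])
  · intro ω hω
    rw [hncardR, hncardF]
    exact main ω ((hrange ω).mp hω)
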